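/- Let n ≥ 6 be an integer divisible by 3. Call a pair (a,b) of integers n-admissible if 1 ≤ a ≤ b, a + 2b ≤ n, and a ≡ b (mod 3). If (a,b) and (a′,b′) are n-admissible with a ≤ a′, b ≤ b′ and (a,b) ≠ (a′,b′), then sin(πa/n)·sin(πb/n)·sin(π(a+b)/n) < sin(πa′/n)·sin(πb′/n)·sin(π(a′+b′)/n); equivalently, D^(n)((a,b)) < D^(n)((a′,b′)). -/
import Mathlib


noncomputable section

/-- The SU(3) quantum dimension `D⁽ⁿ⁾((a,b))`. -/
def qdim (n : ℕ) (l : ℤ × ℤ) : ℝ :=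
  (Real.sin (Real.pi * (l.1 : ℝ) / n) * Real.sin (Real.pi * (l.2 : ℝ) / n) *
      Real.sin (Real.pi * ((l.1 : ℝ) + (l.2 : ℝ)) / n)) /
    (Real.sin (Real.pi / n) ^ 2 * Real.sin (2 * Real.pi / n))

/-- `(a,b)` is `n`-admissible: `1 ≤ a ≤ b`, `a + 2b ≤ n`, `a ≡ b (mod 3)`. -/
def Adm (n : ℕ) (a b : ℤ) : Prop := 1 ≤ a ∧ a ≤ b ∧ a + 2 * b ≤ (n : ℤ) ∧ (3 : ℤ) ∣ (a - b)

open Real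

lemma aux_sin_mul_sin (x y : ℝ) :
    Real.sin x * Real.sin y = (Real.cos (y - x) - Real.cos (y + x)) / 2 := by
  rw [Real.cos_sub, Real.cos_add]; ring

lemma aux_step_b (N a b1 b2 : ℝ) (hN : 0 < N) (h1 : 1 ≤ a) (h2 : a ≤ b1)
    (hbb : b1 < b2) (h3 : a + 2 * b2 ≤ N) :
    Real.sin (π * a / N) * Real.sin (π * b1 / N) * Real.sin (π * (a + b1) / N)
      < Real.sin (π * a / N) * Real.sin (π * b2 / N) * Real.sin (π * (a + b2) / N) := by
  have hpi := Real.pi_pos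
  have hsa : 0 < Real.sin (π * a / N) := by
    apply Real.sin_pos_of_pos_of_lt_pi
    · exact div_pos (mul_pos hpi (by linarith)) hN
    · rw [div_lt_iff₀ hN]; nlinarith
  have key : Real.sin (π * b1 / N) * Real.sin (π * (a + b1) / N)
      < Real.sin (π * b2 / N) * Real.sin (π * (a + b2) / N) := by
    rw [aux_sin_mul_sin, aux_sin_mul_sin,
      show π * (a + b1) / N - π * b1 / N = π * a / N by ring,
      show π * (a + b1) / N + π * b1 / N = π * (a + 2 * b1) / N by ring,
      show π * (a + b2) / N - π * b2 / N = π * a / N by ring,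
      show π * (a + b2) / N + π * b2 / N = π * (a + 2 * b2) / N by ring]
    have hcos : Real.cos (π * (a + 2 * b2) / N) < Real.cos (π * (a + 2 * b1) / N) := by
      apply Real.cos_lt_cos_of_nonneg_of_le_pi
      · exact div_nonneg (mul_nonneg hpi.le (by linarith)) hN.le
      · rw [div_le_iff₀ hN]; nlinarith
      · rw [div_lt_div_iff₀ hN hN]; nlinarith [mul_pos hpi hN]
    linarith
  rw [mul_assoc, mul_assoc]
  exact mul_lt_mul_of_pos_left key hsa

lemma aux_step_a (N a1 a2 b : ℝ) (hN : 0 < N) (h1 : 1 ≤ a1) (haa : a1 < a2)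
    (h2 : a2 ≤ b) (h3 : a2 + 2 * b ≤ N) :
    Real.sin (π * a1 / N) * Real.sin (π * b / N) * Real.sin (π * (a1 + b) / N)
      < Real.sin (π * a2 / N) * Real.sin (π * b / N) * Real.sin (π * (a2 + b) / N) := by
  have hpi := Real.pi_pos
  have hsb : 0 < Real.sin (π * b / N) := by
    apply Real.sin_pos_of_pos_of_lt_pi
    · exact div_pos (mul_pos hpi (by linarith)) hN
    · rw [div_lt_iff₀ hN]; nlinarith
  have key : Real.sin (π * a1 / N) * Real.sin (π * (a1 + b) / N)
      < Real.sin (π * a2 / N) * Real.sin (π * (a2 + b) / N) := by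
    rw [aux_sin_mul_sin, aux_sin_mul_sin,
      show π * (a1 + b) / N - π * a1 / N = π * b / N by ring,
      show π * (a1 + b) / N + π * a1 / N = π * (2 * a1 + b) / N by ring,
      show π * (a2 + b) / N - π * a2 / N = π * b / N by ring,
      show π * (a2 + b) / N + π * a2 / N = π * (2 * a2 + b) / N by ring]
    have hcos : Real.cos (π * (2 * a2 + b) / N) < Real.cos (π * (2 * a1 + b) / N) := by
      apply Real.cos_lt_cos_of_nonneg_of_le_pi
      · exact div_nonneg (mul_nonneg hpi.le (by linarith)) hN.le
      · rw [div_le_iff₀ hN]; nlinarith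
      · rw [div_lt_div_iff₀ hN hN]; nlinarith [mul_pos hpi hN]
    linarith
  calc Real.sin (π * a1 / N) * Real.sin (π * b / N) * Real.sin (π * (a1 + b) / N)
      = Real.sin (π * b / N) * (Real.sin (π * a1 / N) * Real.sin (π * (a1 + b) / N)) := by ring
    _ < Real.sin (π * b / N) * (Real.sin (π * a2 / N) * Real.sin (π * (a2 + b) / N)) :=
        mul_lt_mul_of_pos_left key hsb
    _ = Real.sin (π * a2 / N) * Real.sin (π * b / N) * Real.sin (π * (a2 + b) / N) := by ring

theorem statement19 (n : ℕ) (hn : 6 ≤ n) (h3 : 3 ∣ n)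
    (a b a' b' : ℤ) (h : Adm n a b) (h' : Adm n a' b')
    (ha : a ≤ a') (hb : b ≤ b') (hne : (a, b) ≠ (a', b')) :
    Real.sin (Real.pi * (a : ℝ) / n) * Real.sin (Real.pi * (b : ℝ) / n) *
        Real.sin (Real.pi * ((a : ℝ) + (b : ℝ)) / n) <
      Real.sin (Real.pi * (a' : ℝ) / n) * Real.sin (Real.pi * (b' : ℝ) / n) *
        Real.sin (Real.pi * ((a' : ℝ) + (b' : ℝ)) / n) ∧
    qdim n (a, b) < qdim n (a', b') := by
  obtain ⟨h1, h2, h3b, -⟩ := h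
  obtain ⟨h1', h2', h3b', -⟩ := h'
  have hN : (0 : ℝ) < (n : ℝ) := by
    have : (6 : ℝ) ≤ (n : ℝ) := by exact_mod_cast hn
    linarith
  have r1 : (1 : ℝ) ≤ (a : ℝ) := by exact_mod_cast h1
  have r2 : (a : ℝ) ≤ (b : ℝ) := by exact_mod_cast h2
  have r3 : (a : ℝ) + 2 * (b : ℝ) ≤ (n : ℝ) := by exact_mod_cast h3b
  have r1' : (1 : ℝ) ≤ (a' : ℝ) := by exact_mod_cast h1'
  have r2' : (a' : ℝ) ≤ (b' : ℝ) := by exact_mod_cast h2'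
  have r3' : (a' : ℝ) + 2 * (b' : ℝ) ≤ (n : ℝ) := by exact_mod_cast h3b'
  have rha : (a : ℝ) ≤ (a' : ℝ) := by exact_mod_cast ha
  have rhb : (b : ℝ) ≤ (b' : ℝ) := by exact_mod_cast hb
  have H : Real.sin (Real.pi * (a : ℝ) / n) * Real.sin (Real.pi * (b : ℝ) / n) *
        Real.sin (Real.pi * ((a : ℝ) + (b : ℝ)) / n) <
      Real.sin (Real.pi * (a' : ℝ) / n) * Real.sin (Real.pi * (b' : ℝ) / n) *
        Real.sin (Real.pi * ((a' : ℝ) + (b' : ℝ)) / n) := by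
    rcases ha.lt_or_eq with haa | haa
    · rcases hb.lt_or_eq with hbb | hbb
      · have rhaa : (a : ℝ) < (a' : ℝ) := by exact_mod_cast haa
        have rhbb : (b : ℝ) < (b' : ℝ) := by exact_mod_cast hbb
        calc Real.sin (Real.pi * (a : ℝ) / n) * Real.sin (Real.pi * (b : ℝ) / n) *
              Real.sin (Real.pi * ((a : ℝ) + (b : ℝ)) / n)
            < Real.sin (Real.pi * (a : ℝ) / n) * Real.sin (Real.pi * (b' : ℝ) / n) *
              Real.sin (Real.pi * ((a : ℝ) + (b' : ℝ)) / n) :=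
              aux_step_b n (a : ℝ) b b' hN r1 r2 rhbb (by linarith)
          _ < _ := aux_step_a n (a : ℝ) a' b' hN r1 rhaa r2' (by linarith)
      · subst hbb
        have rhaa : (a : ℝ) < (a' : ℝ) := by exact_mod_cast haa
        exact aux_step_a n (a : ℝ) a' b hN r1 rhaa r2' (by linarith)
    · subst haa
      have hbb : b < b' := by
        rcases hb.lt_or_eq with hbb | hbb
        · exact hbb
        · exact absurd (by rw [hbb]) hne
      have rhbb : (b : ℝ) < (b' : ℝ) := by exact_mod_cast hbb
      exact aux_step_b n (a : ℝ) b b' hN r1 r2 rhbb (by linarith)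
  refine ⟨H, ?_⟩
  have hpi := Real.pi_pos
  have hden : 0 < Real.sin (Real.pi / n) ^ 2 * Real.sin (2 * Real.pi / n) := by
    have hn6 : (6 : ℝ) ≤ (n : ℝ) := by exact_mod_cast hn
    have hs1 : 0 < Real.sin (Real.pi / n) := by
      apply Real.sin_pos_of_pos_of_lt_pi
      · exact div_pos hpi hN
      · rw [div_lt_iff₀ hN]; nlinarith
    have hs2 : 0 < Real.sin (2 * Real.pi / n) := by
      apply Real.sin_pos_of_pos_of_lt_pi
      · exact div_pos (by linarith) hN
      · rw [div_lt_iff₀ hN]; nlinarith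
    positivity
  unfold qdim
  exact (div_lt_div_iff_of_pos_right hden).mpr H
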